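/- arXiv:1501.06048 — 3 statements merged into one kernel-verified Lean document; each statement's English description precedes it below -/
import Mathlib

section
/- Let p be an odd prime and F a field of characteristic p. The Specht modules S^{(p−j,1^j)} for F𝔖_p, j = 0, 1, …, p−1 (hook partitions), are pairwise non-isomorphic. -/
theorem replicate_one_sorted (j : ℕ) : List.Pairwise (· ≥ ·) (List.replicate j 1) := by
  induction j with
  | zero => simp
  | succ n ih =>
    rw [List.replicate_succ]
    refine List.pairwise_cons.mpr ⟨?_, ih⟩
    intro b hb
    rw [List.eq_of_mem_replicate hb]

/-- The hook Young diagram `(n - j, 1^j)` with `n` cells. -/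
def hookDiagram (n j : ℕ) (h : j < n) : YoungDiagram :=
  YoungDiagram.ofRowLens ((n - j) :: List.replicate j 1) (by
    refine List.sortedGE_iff_pairwise.mpr (List.pairwise_cons.mpr ⟨?_, replicate_one_sorted j⟩)
    intro b hb
    rw [List.eq_of_mem_replicate hb]
    omega)

/-- The row symmetrizer `a_T = Σ_{σ ∈ rowStab(T)} σ` of a tableau `T` of shape `μ`. -/
noncomputable def rowSymmetrizer (F : Type) [Field F] (n : ℕ) (μ : YoungDiagram)
    (T : Fin n ≃ ↥μ.cells) : MonoidAlgebra F (Equiv.Perm (Fin n)) :=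
  ∑ σ ∈ Finset.univ.filter
      (fun σ : Equiv.Perm (Fin n) => ∀ i, ((T (σ i)) : ℕ × ℕ).1 = ((T i) : ℕ × ℕ).1),
    MonoidAlgebra.of F (Equiv.Perm (Fin n)) σ

/-- The column antisymmetrizer `b_T = Σ_{σ ∈ colStab(T)} sign(σ) σ`. -/
noncomputable def colSymmetrizer (F : Type) [Field F] (n : ℕ) (μ : YoungDiagram)
    (T : Fin n ≃ ↥μ.cells) : MonoidAlgebra F (Equiv.Perm (Fin n)) :=
  ∑ σ ∈ Finset.univ.filter
      (fun σ : Equiv.Perm (Fin n) => ∀ i, ((T (σ i)) : ℕ × ℕ).2 = ((T i) : ℕ × ℕ).2),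
    ((Equiv.Perm.sign σ : ℤ) : F) • MonoidAlgebra.of F (Equiv.Perm (Fin n)) σ

/-- The Specht module `S^μ`, realized as the left ideal of the group algebra generated by
the Young symmetrizer `b_T a_T` of a `μ`-tableau `T`. -/
noncomputable def spechtModule (F : Type) [Field F] (n : ℕ) (μ : YoungDiagram)
    (T : Fin n ≃ ↥μ.cells) :
    Submodule (MonoidAlgebra F (Equiv.Perm (Fin n))) (MonoidAlgebra F (Equiv.Perm (Fin n))) :=
  Submodule.span _ {colSymmetrizer F n μ T * rowSymmetrizer F n μ T}

/-- The dual Specht module `S_μ = (S^μ)*`, as a module over the group algebra via the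
contragredient action. -/
noncomputable def dualSpechtModule (F : Type) [Field F] (n : ℕ) (μ : YoungDiagram)
    (T : Fin n ≃ ↥μ.cells) : Type :=
  (Representation.dual (Representation.ofModule' (k := F) (G := Equiv.Perm (Fin n))
    ↥(spechtModule F n μ T))).asModule

noncomputable instance (F : Type) [Field F] (n : ℕ) (μ : YoungDiagram) (T : Fin n ≃ ↥μ.cells) :
    AddCommMonoid (dualSpechtModule F n μ T) := by
  unfold dualSpechtModule; infer_instance

noncomputable instance (F : Type) [Field F] (n : ℕ) (μ : YoungDiagram) (T : Fin n ≃ ↥μ.cells) :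
    Module (MonoidAlgebra F (Equiv.Perm (Fin n))) (dualSpechtModule F n μ T) := by
  unfold dualSpechtModule; infer_instance

section
open Finset MonoidAlgebra

namespace HookAux

variable {F : Type} [Field F] {n : ℕ}

def sg (F : Type) [Field F] {n : ℕ} (σ : Equiv.Perm (Fin n)) : F :=
  ((Equiv.Perm.sign σ : ℤ) : F)

lemma sg_mul (σ τ : Equiv.Perm (Fin n)) : sg F (σ * τ) = sg F σ * sg F τ := by
  simp [sg, ← Int.cast_mul, ← Units.val_mul]

lemma sg_sq (σ : Equiv.Perm (Fin n)) : sg F σ * sg F σ = 1 := by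
  rw [sg, ← Int.cast_mul, ← Units.val_mul, Int.units_mul_self]; simp

lemma sg_inv (σ : Equiv.Perm (Fin n)) : sg F σ⁻¹ = sg F σ := by
  simp [sg]

lemma sg_one : sg F (1 : Equiv.Perm (Fin n)) = 1 := by simp [sg]

lemma single_mul_signedSum {s : Finset (Equiv.Perm (Fin n))} {τ : Equiv.Perm (Fin n)}
    (h1 : ∀ ρ ∈ s, τ * ρ ∈ s) (h2 : ∀ ρ ∈ s, τ⁻¹ * ρ ∈ s) :
    (single τ (1:F) : MonoidAlgebra F (Equiv.Perm (Fin n))) *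
      (∑ σ ∈ s, sg F σ • single σ 1) = sg F τ • ∑ σ ∈ s, sg F σ • single σ 1 := by
  rw [Finset.mul_sum, Finset.smul_sum]
  refine Finset.sum_equiv (Equiv.mulLeft τ) (fun σ => ⟨fun h => h1 σ h, fun h => ?_⟩) ?_
  · have := h2 _ h
    simpa using this
  · intro σ hσ
    simp only [Equiv.coe_mulLeft, mul_smul_comm, single_mul_single, one_mul, smul_smul]
    congr 1
    rw [sg_mul, ← mul_assoc, sg_sq, one_mul]

lemma signedSum_mul_single {s : Finset (Equiv.Perm (Fin n))} {τ : Equiv.Perm (Fin n)}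
    (h1 : ∀ ρ ∈ s, ρ * τ ∈ s) (h2 : ∀ ρ ∈ s, ρ * τ⁻¹ ∈ s) :
    (∑ σ ∈ s, sg F σ • single σ 1) * (single τ (1:F) : MonoidAlgebra F (Equiv.Perm (Fin n)))
      = sg F τ • ∑ σ ∈ s, sg F σ • single σ 1 := by
  rw [Finset.sum_mul, Finset.smul_sum]
  refine Finset.sum_equiv (Equiv.mulRight τ) (fun σ => ⟨fun h => h1 σ h, fun h => ?_⟩) ?_
  · have := h2 _ h
    simpa using this
  · intro σ hσ
    simp only [Equiv.coe_mulRight, smul_mul_assoc, single_mul_single, mul_one, smul_smul]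
    congr 1
    rw [sg_mul, mul_comm (sg F σ), ← mul_assoc, sg_sq, one_mul]

lemma single_mul_plainSum {s : Finset (Equiv.Perm (Fin n))} {τ : Equiv.Perm (Fin n)}
    (h1 : ∀ ρ ∈ s, τ * ρ ∈ s) (h2 : ∀ ρ ∈ s, τ⁻¹ * ρ ∈ s) :
    (single τ (1:F) : MonoidAlgebra F (Equiv.Perm (Fin n))) *
      (∑ σ ∈ s, single σ (1:F)) = ∑ σ ∈ s, single σ (1:F) := by
  rw [Finset.mul_sum]
  refine Finset.sum_equiv (Equiv.mulLeft τ) (fun σ => ⟨fun h => h1 σ h, fun h => ?_⟩) ?_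
  · have := h2 _ h
    simpa using this
  · intro σ hσ
    simp [single_mul_single]

lemma plainSum_mul_single {s : Finset (Equiv.Perm (Fin n))} {τ : Equiv.Perm (Fin n)}
    (h1 : ∀ ρ ∈ s, ρ * τ ∈ s) (h2 : ∀ ρ ∈ s, ρ * τ⁻¹ ∈ s) :
    (∑ σ ∈ s, single σ (1:F)) * (single τ (1:F) : MonoidAlgebra F (Equiv.Perm (Fin n)))
      = ∑ σ ∈ s, single σ (1:F) := by
  rw [Finset.sum_mul]
  refine Finset.sum_equiv (Equiv.mulRight τ) (fun σ => ⟨fun h => h1 σ h, fun h => ?_⟩) ?_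
  · have := h2 _ h
    simpa using this
  · intro σ hσ
    simp [single_mul_single]

variable {μ : YoungDiagram} (T : Fin n ≃ ↥μ.cells)

lemma single_mul_rowSym {τ : Equiv.Perm (Fin n)}
    (hτ : ∀ i, ((T (τ i)) : ℕ × ℕ).1 = ((T i) : ℕ × ℕ).1) :
    (single τ (1:F)) * rowSymmetrizer F n μ T = rowSymmetrizer F n μ T := by
  have hτ' : ∀ i, ((T (τ⁻¹ i)) : ℕ × ℕ).1 = ((T i) : ℕ × ℕ).1 := by
    intro i
    have := hτ (τ⁻¹ i)
    rw [← Equiv.Perm.mul_apply, mul_inv_cancel, Equiv.Perm.one_apply] at this; exact this.symm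
  rw [rowSymmetrizer]
  simp only [MonoidAlgebra.of_apply]
  refine single_mul_plainSum ?_ ?_ <;> intro ρ hρ <;>
    simp only [Finset.mem_filter, Finset.mem_univ, true_and] at hρ ⊢ <;> intro i
  · rw [Equiv.Perm.mul_apply, hτ (ρ i), hρ i]
  · rw [Equiv.Perm.mul_apply, hτ' (ρ i), hρ i]

lemma rowSym_mul_single {τ : Equiv.Perm (Fin n)}
    (hτ : ∀ i, ((T (τ i)) : ℕ × ℕ).1 = ((T i) : ℕ × ℕ).1) :
    rowSymmetrizer F n μ T * (single τ (1:F)) = rowSymmetrizer F n μ T := by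
  have hτ' : ∀ i, ((T (τ⁻¹ i)) : ℕ × ℕ).1 = ((T i) : ℕ × ℕ).1 := by
    intro i
    have := hτ (τ⁻¹ i)
    rw [← Equiv.Perm.mul_apply, mul_inv_cancel, Equiv.Perm.one_apply] at this; exact this.symm
  rw [rowSymmetrizer]
  simp only [MonoidAlgebra.of_apply]
  refine plainSum_mul_single ?_ ?_ <;> intro ρ hρ <;>
    simp only [Finset.mem_filter, Finset.mem_univ, true_and] at hρ ⊢ <;> intro i
  · rw [Equiv.Perm.mul_apply, hρ (τ i), hτ i]
  · rw [Equiv.Perm.mul_apply, hρ (τ⁻¹ i), hτ' i]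

lemma colSym_eq_signedSum :
    colSymmetrizer F n μ T = ∑ σ ∈ Finset.univ.filter
      (fun σ : Equiv.Perm (Fin n) => ∀ i, ((T (σ i)) : ℕ × ℕ).2 = ((T i) : ℕ × ℕ).2),
      sg F σ • single σ 1 := by
  rw [colSymmetrizer]
  simp [sg, MonoidAlgebra.of_apply]

lemma single_mul_colSym {τ : Equiv.Perm (Fin n)}
    (hτ : ∀ i, ((T (τ i)) : ℕ × ℕ).2 = ((T i) : ℕ × ℕ).2) :
    (single τ (1:F)) * colSymmetrizer F n μ T = sg F τ • colSymmetrizer F n μ T := by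
  have hτ' : ∀ i, ((T (τ⁻¹ i)) : ℕ × ℕ).2 = ((T i) : ℕ × ℕ).2 := by
    intro i
    have := hτ (τ⁻¹ i)
    rw [← Equiv.Perm.mul_apply, mul_inv_cancel, Equiv.Perm.one_apply] at this; exact this.symm
  rw [colSym_eq_signedSum]
  refine single_mul_signedSum ?_ ?_ <;> intro ρ hρ <;>
    simp only [Finset.mem_filter, Finset.mem_univ, true_and] at hρ ⊢ <;> intro i
  · rw [Equiv.Perm.mul_apply, hτ (ρ i), hρ i]
  · rw [Equiv.Perm.mul_apply, hτ' (ρ i), hρ i]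

lemma young_apply_one :
    (colSymmetrizer F n μ T * rowSymmetrizer F n μ T).coeff (1 : Equiv.Perm (Fin n)) = 1 := by
  have expand : colSymmetrizer F n μ T * rowSymmetrizer F n μ T
      = ∑ σ ∈ Finset.univ.filter
          (fun σ : Equiv.Perm (Fin n) => ∀ i, ((T (σ i)) : ℕ × ℕ).2 = ((T i) : ℕ × ℕ).2),
        ∑ τ ∈ Finset.univ.filter
          (fun σ : Equiv.Perm (Fin n) => ∀ i, ((T (σ i)) : ℕ × ℕ).1 = ((T i) : ℕ × ℕ).1),
          sg F σ • single (σ * τ) (1:F) := by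
    rw [colSym_eq_signedSum, rowSymmetrizer]
    simp only [MonoidAlgebra.of_apply]
    rw [Finset.sum_mul]
    refine Finset.sum_congr rfl fun σ _ => ?_
    rw [smul_mul_assoc, Finset.mul_sum, Finset.smul_sum]
    refine Finset.sum_congr rfl fun τ _ => ?_
    rw [single_mul_single, one_mul]
  rw [expand, MonoidAlgebra.coeff_sum, Finsupp.finset_sum_apply]
  have step : ∀ σ ∈ Finset.univ.filter
          (fun σ : Equiv.Perm (Fin n) => ∀ i, ((T (σ i)) : ℕ × ℕ).2 = ((T i) : ℕ × ℕ).2),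
      (∑ τ ∈ Finset.univ.filter
          (fun σ : Equiv.Perm (Fin n) => ∀ i, ((T (σ i)) : ℕ × ℕ).1 = ((T i) : ℕ × ℕ).1),
          sg F σ • single (σ * τ) (1:F)).coeff (1 : Equiv.Perm (Fin n))
        = if σ⁻¹ ∈ Finset.univ.filter
          (fun σ : Equiv.Perm (Fin n) => ∀ i, ((T (σ i)) : ℕ × ℕ).1 = ((T i) : ℕ × ℕ).1)
          then sg F σ else 0 := by
    intro σ _
    rw [MonoidAlgebra.coeff_sum, Finsupp.finset_sum_apply]
    refine Eq.trans (Finset.sum_congr rfl fun τ _ => ?_)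
      (Finset.sum_ite_eq _ σ⁻¹ (fun _ => sg F σ))
    rw [MonoidAlgebra.coeff_smul, Finsupp.smul_apply, MonoidAlgebra.coeff_single, Finsupp.single_apply, smul_eq_mul, mul_ite, mul_one, mul_zero]
    simp_rw [mul_eq_one_iff_inv_eq]
  rw [Finset.sum_congr rfl step]
  rw [Finset.sum_eq_single_of_mem (1 : Equiv.Perm (Fin n)) (by simp) ?_]
  · rw [if_pos (by simp), sg_one]
  · intro σ hσ hne
    rw [if_neg]
    intro hmem
    apply hne
    simp only [Finset.mem_filter, Finset.mem_univ, true_and] at hσ hmem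
    ext i : 1
    have hr : ((T (σ i)) : ℕ × ℕ).1 = ((T i) : ℕ × ℕ).1 := by
      have := hmem (σ i)
      rw [← Equiv.Perm.mul_apply, inv_mul_cancel, Equiv.Perm.one_apply] at this
      exact this.symm
    have : T (σ i) = T i := Subtype.ext (Prod.ext hr (hσ i))
    exact T.injective this

lemma young_ne_zero : colSymmetrizer F n μ T * rowSymmetrizer F n μ T ≠ 0 := by
  intro h
  have h1 := young_apply_one (F := F) (μ := μ) T
  rw [h] at h1
  simp at h1

lemma hook_mem {n j : ℕ} (h : j < n) (c : ℕ × ℕ) :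
    c ∈ (hookDiagram n j h).cells ↔
      (c.1 = 0 ∧ c.2 < n - j) ∨ (0 < c.1 ∧ c.1 ≤ j ∧ c.2 = 0) := by
  obtain ⟨r, cc⟩ := c
  rw [YoungDiagram.mem_cells, hookDiagram, YoungDiagram.mem_ofRowLens]
  cases r with
  | zero => simp
  | succ r =>
    simp only [List.length_cons, List.length_replicate]
    constructor
    · rintro ⟨hr, hc⟩
      simp only [List.getElem_cons_succ] at hc
      rw [List.getElem_replicate] at hc
      omega
    · rintro (⟨h0, -⟩ | ⟨-, hr, hc⟩)
      · omega
      · refine ⟨by omega, ?_⟩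
        simp only [List.getElem_cons_succ]
        rw [List.getElem_replicate]
        omega

lemma hook_row_lt {n j : ℕ} (h : j < n) {c : ℕ × ℕ} (hc : c ∈ (hookDiagram n j h).cells) :
    c.1 < j + 1 := by
  rcases (hook_mem h c).1 hc with ⟨h1, -⟩ | ⟨-, h1, -⟩ <;> omega

lemma hook_corner_mem {n j : ℕ} (h : j < n) (r : ℕ) (hr : r ≤ j) :
    ((r, 0) : ℕ × ℕ) ∈ (hookDiagram n j h).cells := by
  rw [hook_mem h]
  rcases Nat.eq_zero_or_pos r with h0 | h0
  · exact Or.inl ⟨h0, by omega⟩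
  · exact Or.inr ⟨h0, hr, rfl⟩

lemma z_mul_specht_eq_zero {F : Type} [Field F] {p l : ℕ} (h2 : (2:F) ≠ 0) (hlp : l < p)
    (Tl : Fin p ≃ ↥((hookDiagram p l hlp).cells))
    (X' : Finset (Fin p)) (hX'card : X'.card = l + 2)
    {m : MonoidAlgebra F (Equiv.Perm (Fin p))}
    (hm : m ∈ spechtModule F p (hookDiagram p l hlp) Tl) :
    (∑ σ ∈ Finset.univ.filter (fun σ : Equiv.Perm (Fin p) => ∀ i ∉ X', σ i = i),
        sg F σ • single σ (1:F)) * m = 0 := by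
  set z := (∑ σ ∈ Finset.univ.filter (fun σ : Equiv.Perm (Fin p) => ∀ i ∉ X', σ i = i),
        sg F σ • single σ (1:F)) with hz
  set al := rowSymmetrizer F p (hookDiagram p l hlp) Tl with hal
  have step1 : ∀ h : Equiv.Perm (Fin p), z * (single h (1:F) * al) = 0 := by
    intro h
    obtain ⟨x, hx, y, hy, hxy, hfeq⟩ :=
      Finset.exists_ne_map_eq_of_card_lt_of_maps_to
        (t := Finset.range (l+1)) (f := fun i => ((Tl (h⁻¹ i)) : ℕ × ℕ).1)
        (show (Finset.range (l+1)).card < X'.card by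
          rw [Finset.card_range, hX'card]; omega)
        (fun i _ => Finset.mem_range.2 (hook_row_lt hlp (Tl (h⁻¹ i)).2))
    have htQ : ∀ i, i ∉ X' → Equiv.swap x y i = i := fun i hi =>
      Equiv.swap_apply_of_ne_of_ne (fun e => hi (e ▸ hx)) (fun e => hi (e ▸ hy))
    have hsg_t : sg F (Equiv.swap x y) = -1 := by
      rw [sg, Equiv.Perm.sign_swap hxy]; simp
    have hrow : ∀ i, ((Tl ((h⁻¹ * Equiv.swap x y * h) i)) : ℕ × ℕ).1 = ((Tl i) : ℕ × ℕ).1 := by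
      intro i
      have hrepr : (h⁻¹ * Equiv.swap x y * h) i = h⁻¹ (Equiv.swap x y (h i)) := rfl
      rw [hrepr]
      by_cases h1 : h i = x
      · rw [h1, Equiv.swap_apply_left]
        have hi' : h⁻¹ x = i := by rw [← h1]; exact h.symm_apply_apply i
        calc ((Tl (h⁻¹ y)) : ℕ × ℕ).1 = ((Tl (h⁻¹ x)) : ℕ × ℕ).1 := hfeq.symm
          _ = ((Tl i) : ℕ × ℕ).1 := by rw [hi']
      · by_cases h2' : h i = y
        · rw [h2', Equiv.swap_apply_right]
          have hi' : h⁻¹ y = i := by rw [← h2']; exact h.symm_apply_apply i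
          calc ((Tl (h⁻¹ x)) : ℕ × ℕ).1 = ((Tl (h⁻¹ y)) : ℕ × ℕ).1 := hfeq
            _ = ((Tl i) : ℕ × ℕ).1 := by rw [hi']
        · rw [Equiv.swap_apply_of_ne_of_ne h1 h2', ← Equiv.Perm.mul_apply, inv_mul_cancel, Equiv.Perm.one_apply]
    have habs := single_mul_rowSym (F := F) Tl hrow
    rw [← hal] at habs
    have hz_t : z * single (Equiv.swap x y) (1:F) = sg F (Equiv.swap x y) • z := by
      rw [hz]
      refine signedSum_mul_single ?_ ?_ <;> intro ρ hρ <;>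
        simp only [Finset.mem_filter, Finset.mem_univ, true_and] at hρ ⊢ <;> intro i hi
      · rw [Equiv.Perm.mul_apply, htQ i hi, hρ i hi]
      · rw [Equiv.Perm.mul_apply, Equiv.swap_inv, htQ i hi, hρ i hi]
    have key1 : single h (1:F) * al
        = single (Equiv.swap x y) (1:F) * (single h 1 * al) := by
      have hgrp : h * (h⁻¹ * Equiv.swap x y * h) = Equiv.swap x y * h := by group
      conv_lhs => rw [← habs]
      rw [← mul_assoc, single_mul_single, one_mul, hgrp, ← mul_assoc, single_mul_single, one_mul]
    have heq : z * (single h (1:F) * al) = (-1 : F) • (z * (single h (1:F) * al)) := by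
      conv_lhs => rw [key1, ← mul_assoc, hz_t]
      rw [smul_mul_assoc, hsg_t]
    have h2u : (2:F) • (z * (single h (1:F) * al)) = 0 := by
      rw [two_smul]
      nth_rewrite 1 [heq]
      rw [neg_one_smul, neg_add_cancel]
    rcases smul_eq_zero.1 h2u with hc | hv
    · exact absurd hc h2
    · exact hv
  have step2 : ∀ w : MonoidAlgebra F (Equiv.Perm (Fin p)), z * (w * al) = 0 := by
    intro w
    induction w using MonoidAlgebra.induction_linear with
    | zero => simp
    | add f g hf hg => rw [add_mul, mul_add, hf, hg, add_zero]
    | single g b =>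
      have hb : (single g b : MonoidAlgebra F (Equiv.Perm (Fin p))) = b • single g 1 := by
        rw [MonoidAlgebra.smul_single, smul_eq_mul, mul_one]
      rw [hb, smul_mul_assoc, mul_smul_comm, step1 g, smul_zero]
  have hm' : m ∈ Submodule.span (MonoidAlgebra F (Equiv.Perm (Fin p)))
      {colSymmetrizer F p (hookDiagram p l hlp) Tl * al} := hm
  obtain ⟨w, hw⟩ := Submodule.mem_span_singleton.1 hm'
  rw [← hw, smul_eq_mul, ← mul_assoc w]
  exact step2 _

lemma card_fixfilter {p : ℕ} (X' : Finset (Fin p)) :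
    (Finset.univ.filter (fun σ : Equiv.Perm (Fin p) => ∀ i ∉ X', σ i = i)).card
      = Nat.factorial X'.card := by
  have h1 := Fintype.card_subtype (p := fun σ : Equiv.Perm (Fin p) => ∀ i ∉ X', σ i = i)
  rw [← h1]
  calc Fintype.card {σ : Equiv.Perm (Fin p) // ∀ i ∉ X', σ i = i}
      = Fintype.card (Equiv.Perm {x : Fin p // x ∈ X'}) :=
        Fintype.card_congr (Equiv.Perm.subtypeEquivSubtypePerm (fun x => x ∈ X')).symm
    _ = Nat.factorial (Fintype.card {x : Fin p // x ∈ X'}) := Fintype.card_perm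
    _ = Nat.factorial X'.card := by rw [Fintype.card_coe]

lemma card_colzero {p j : ℕ} (hjp : j < p) (Tj : Fin p ≃ ↥((hookDiagram p j hjp).cells)) :
    (Finset.univ.filter fun i : Fin p => ((Tj i : ℕ × ℕ)).2 = 0).card = j + 1 := by
  rw [← Finset.card_range (j+1)]
  apply Finset.card_nbij' (i := fun ii => ((Tj ii : ℕ × ℕ)).1)
      (j := fun r => Tj.symm ⟨(min r j, 0), hook_corner_mem hjp _ (min_le_right r j)⟩)
  · intro a _
    exact Finset.mem_range.2 (hook_row_lt hjp (Tj a).2)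
  · intro r _
    simp only [Finset.coe_filter, Set.mem_setOf_eq, Finset.mem_filter, Finset.mem_univ, true_and]
    rw [Equiv.apply_symm_apply]
  · intro a ha
    simp only [Finset.coe_filter, Set.mem_setOf_eq, Finset.mem_filter, Finset.mem_univ, true_and] at ha
    have hle : ((Tj a : ℕ × ℕ)).1 ≤ j := Nat.lt_succ_iff.1 (hook_row_lt hjp (Tj a).2)
    rw [Equiv.symm_apply_eq]
    exact Subtype.ext (Prod.ext (min_eq_left hle) ha.symm)
  · intro r hr
    beta_reduce
    rw [Equiv.apply_symm_apply]
    exact min_eq_left (Nat.lt_succ_iff.1 (Finset.mem_range.1 hr))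

lemma z_mul_young {F : Type} [Field F] {p j : ℕ} (hjp : j < p)
    (Tj : Fin p ≃ ↥((hookDiagram p j hjp).cells)) (X' : Finset (Fin p))
    (hsub : ∀ i ∈ X', ((Tj i : ℕ × ℕ)).2 = 0) :
    (∑ σ ∈ Finset.univ.filter (fun σ : Equiv.Perm (Fin p) => ∀ i ∉ X', σ i = i),
        sg F σ • single σ (1:F)) *
      (colSymmetrizer F p (hookDiagram p j hjp) Tj * rowSymmetrizer F p (hookDiagram p j hjp) Tj)
      = (((Finset.univ.filter (fun σ : Equiv.Perm (Fin p) => ∀ i ∉ X', σ i = i)).card : F))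
          • (colSymmetrizer F p (hookDiagram p j hjp) Tj
              * rowSymmetrizer F p (hookDiagram p j hjp) Tj) := by
  set Hf := Finset.univ.filter (fun σ : Equiv.Perm (Fin p) => ∀ i ∉ X', σ i = i) with hHf
  have hcol : ∀ τ ∈ Hf, ∀ i, ((Tj (τ i) : ℕ × ℕ)).2 = ((Tj i : ℕ × ℕ)).2 := by
    intro τ hτ i
    rw [hHf, Finset.mem_filter] at hτ
    by_cases hi : i ∈ X'
    · have hti : τ i ∈ X' := by
        by_contra hni
        have h1 := hτ.2 _ hni
        have heq : τ i = i := τ.injective h1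
        rw [heq] at hni
        exact hni hi
      rw [hsub _ hti, hsub _ hi]
    · rw [hτ.2 i hi]
  have hzc : (∑ σ ∈ Hf, sg F σ • single σ (1:F)) * colSymmetrizer F p (hookDiagram p j hjp) Tj
      = (Hf.card : F) • colSymmetrizer F p (hookDiagram p j hjp) Tj := by
    rw [Finset.sum_mul]
    have hterm : ∀ τ ∈ Hf, (sg F τ • single τ (1:F)) * colSymmetrizer F p (hookDiagram p j hjp) Tj
        = colSymmetrizer F p (hookDiagram p j hjp) Tj := by
      intro τ hτ
      rw [smul_mul_assoc, single_mul_colSym Tj (hcol τ hτ), smul_smul, sg_sq, one_smul]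
    rw [Finset.sum_congr rfl hterm, Finset.sum_const, Nat.cast_smul_eq_nsmul]
  rw [← mul_assoc, hzc, smul_mul_assoc]

theorem key {p : ℕ} (hpp : p.Prime) (hodd : Odd p) {F : Type} [Field F] [CharP F p]
    {j l : ℕ} (hjp : j < p) (hlp : l < p) (hlt : l < j)
    (Tj : Fin p ≃ ↥((hookDiagram p j hjp).cells))
    (Tl : Fin p ≃ ↥((hookDiagram p l hlp).cells))
    (φ : ↥(spechtModule F p (hookDiagram p j hjp) Tj)
        ≃ₗ[MonoidAlgebra F (Equiv.Perm (Fin p))] ↥(spechtModule F p (hookDiagram p l hlp) Tl)) :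
    False := by
  have hp2 : 2 ≤ p := hpp.two_le
  have h2 : (2:F) ≠ 0 := by
    intro h20
    have hd : p ∣ 2 := by
      have hc : ((2:ℕ) : F) = 0 := by exact_mod_cast h20
      exact (CharP.cast_eq_zero_iff F p 2).1 hc
    have hp2' : p = 2 := (Nat.prime_dvd_prime_iff_eq hpp Nat.prime_two).1 hd
    rw [hp2'] at hodd
    exact (by decide : ¬ Odd 2) hodd
  set ej := colSymmetrizer F p (hookDiagram p j hjp) Tj
      * rowSymmetrizer F p (hookDiagram p j hjp) Tj with hej
  have hejmem : ej ∈ spechtModule F p (hookDiagram p j hjp) Tj :=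
    Submodule.mem_span_singleton_self _
  set xj : ↥(spechtModule F p (hookDiagram p j hjp) Tj) := ⟨ej, hejmem⟩ with hxj
  have hxjne : xj ≠ 0 := by
    intro h0
    apply young_ne_zero (F := F) (μ := hookDiagram p j hjp) Tj
    have := congrArg Subtype.val h0
    exact this
  set v := φ xj with hv
  have hvne : v ≠ 0 := by
    rw [hv]
    exact φ.map_ne_zero_iff.2 hxjne
  have hvmem : (↑v : MonoidAlgebra F (Equiv.Perm (Fin p)))
      ∈ spechtModule F p (hookDiagram p l hlp) Tl := v.2
  by_cases hcase : j = p - 1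
  · -- sign-vector case
    have hallcol : ∀ c : { x // x ∈ (hookDiagram p j hjp).cells }, ((c : ℕ × ℕ)).2 = 0 := by
      intro c
      rcases (hook_mem hjp (c : ℕ × ℕ)).1 c.2 with ⟨-, hlt1⟩ | ⟨-, -, h0⟩
      · omega
      · exact h0
    have hsign : ∀ σ : Equiv.Perm (Fin p), single σ (1:F) * ej = sg F σ • ej := by
      intro σ
      rw [hej, ← mul_assoc,
        single_mul_colSym Tj (fun i => by rw [hallcol (Tj (σ i)), hallcol (Tj i)]),
        smul_mul_assoc]
    have hvsign : ∀ σ : Equiv.Perm (Fin p),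
        single σ (1:F) * (↑v : MonoidAlgebra F (Equiv.Perm (Fin p))) = sg F σ • ↑v := by
      intro σ
      have hsm : (single σ (1:F) : MonoidAlgebra F (Equiv.Perm (Fin p))) • xj
          = (algebraMap F (MonoidAlgebra F (Equiv.Perm (Fin p))) (sg F σ)) • xj := by
        apply Subtype.ext
        rw [SetLike.val_smul, SetLike.val_smul, smul_eq_mul, smul_eq_mul, ← Algebra.smul_def]
        exact hsign σ
      have hφ : (single σ (1:F) : MonoidAlgebra F (Equiv.Perm (Fin p))) • v
          = (algebraMap F (MonoidAlgebra F (Equiv.Perm (Fin p))) (sg F σ)) • v := by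
        rw [hv, ← map_smul φ, hsm, map_smul φ]
      have hval := congrArg Subtype.val hφ
      rwa [SetLike.val_smul, SetLike.val_smul, smul_eq_mul, smul_eq_mul,
        ← Algebra.smul_def] at hval
    have hcoef : ∀ g : Equiv.Perm (Fin p),
        (↑v : MonoidAlgebra F (Equiv.Perm (Fin p))).coeff g
          = sg F g * (↑v : MonoidAlgebra F (Equiv.Perm (Fin p))).coeff 1 := by
      intro g
      have h1 := congrArg (fun w : MonoidAlgebra F (Equiv.Perm (Fin p)) => w.coeff g) (hvsign g)
      rw [MonoidAlgebra.coeff_single_mul_apply, one_mul, inv_mul_cancel,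
        MonoidAlgebra.coeff_smul, Finsupp.smul_apply, smul_eq_mul] at h1
      calc (↑v : MonoidAlgebra F (Equiv.Perm (Fin p))).coeff g
          = (sg F g * sg F g) * (↑v : MonoidAlgebra F (Equiv.Perm (Fin p))).coeff g := by
            rw [sg_sq, one_mul]
        _ = sg F g * (sg F g * (↑v : MonoidAlgebra F (Equiv.Perm (Fin p))).coeff g) := by
            rw [mul_assoc]
        _ = sg F g * (↑v : MonoidAlgebra F (Equiv.Perm (Fin p))).coeff 1 := by rw [← h1]
    have hc00 : ((0,0) : ℕ × ℕ) ∈ (hookDiagram p l hlp).cells :=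
      hook_corner_mem hlp 0 (Nat.zero_le l)
    have hc01 : ((0,1) : ℕ × ℕ) ∈ (hookDiagram p l hlp).cells := by
      rw [hook_mem hlp]
      left
      exact ⟨rfl, by omega⟩
    set xx := Tl.symm ⟨(0,0), hc00⟩ with hxxd
    set yy := Tl.symm ⟨(0,1), hc01⟩ with hyyd
    have hxxyy : xx ≠ yy := by
      intro h0
      have h1 := congrArg (fun i => ((Tl i : ℕ × ℕ)).2) h0
      simp only [hxxd, hyyd, Equiv.apply_symm_apply] at h1
      exact absurd h1 (by norm_num)
    have hrowt : ∀ i, ((Tl (Equiv.swap xx yy i) : ℕ × ℕ)).1 = ((Tl i : ℕ × ℕ)).1 := by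
      intro i
      by_cases h1 : i = xx
      · rw [h1, Equiv.swap_apply_left, hxxd, hyyd, Equiv.apply_symm_apply,
          Equiv.apply_symm_apply]
      · by_cases h2' : i = yy
        · rw [h2', Equiv.swap_apply_right, hxxd, hyyd, Equiv.apply_symm_apply,
            Equiv.apply_symm_apply]
        · rw [Equiv.swap_apply_of_ne_of_ne h1 h2']
    have habs := rowSym_mul_single (F := F) Tl hrowt
    obtain ⟨w, hw⟩ := Submodule.mem_span_singleton.1 hvmem
    have hvt : (↑v : MonoidAlgebra F (Equiv.Perm (Fin p))) * single (Equiv.swap xx yy) (1:F)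
        = ↑v := by
      rw [← hw, smul_eq_mul, mul_assoc, mul_assoc, habs]
    have hsgt : sg F (Equiv.swap xx yy) = -1 := by
      rw [sg, Equiv.Perm.sign_swap hxxyy]; simp
    have hvt' : (↑v : MonoidAlgebra F (Equiv.Perm (Fin p))) * single (Equiv.swap xx yy) (1:F)
        = -↑v := by
      refine MonoidAlgebra.ext (Finsupp.ext fun g => ?_)
      rw [MonoidAlgebra.coeff_mul_single_apply, mul_one, hcoef (g * (Equiv.swap xx yy)⁻¹),
        MonoidAlgebra.coeff_neg, Finsupp.neg_apply, hcoef g, sg_mul, sg_inv, hsgt]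
      ring
    have hvv : (↑v : MonoidAlgebra F (Equiv.Perm (Fin p))) = -↑v := hvt.symm.trans hvt'
    have h2v : (2:F) • (↑v : MonoidAlgebra F (Equiv.Perm (Fin p))) = 0 := by
      rw [two_smul]
      nth_rewrite 1 [hvv]
      rw [neg_add_cancel]
    rcases smul_eq_zero.1 h2v with hc | hv0
    · exact h2 hc
    · exact hvne (Subtype.ext (by simpa using hv0))
  · -- generic case
    obtain ⟨X', hX'sub, hX'card⟩ := Finset.exists_subset_card_eq
      (s := Finset.univ.filter fun i : Fin p => ((Tj i : ℕ × ℕ)).2 = 0) (n := l + 2)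
      (by rw [card_colzero hjp Tj]; omega)
    have hA := z_mul_young (F := F) hjp Tj X'
      (fun i hi => (Finset.mem_filter.1 (hX'sub hi)).2)
    set Hf := Finset.univ.filter (fun σ : Equiv.Perm (Fin p) => ∀ i ∉ X', σ i = i) with hHf
    set z := ∑ σ ∈ Hf, sg F σ • single σ (1:F) with hz
    have hcard : Hf.card = Nat.factorial (l+2) := by
      rw [hHf, card_fixfilter, hX'card]
    have hcF : ((Hf.card : F)) ≠ 0 := by
      rw [hcard]
      intro h0
      have hdvd := (CharP.cast_eq_zero_iff F p _).1 h0
      have hple := (Nat.Prime.dvd_factorial hpp).1 hdvd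
      omega
    have hsm : z • xj = (algebraMap F (MonoidAlgebra F (Equiv.Perm (Fin p))) (Hf.card : F)) • xj := by
      apply Subtype.ext
      rw [SetLike.val_smul, SetLike.val_smul, smul_eq_mul, smul_eq_mul, ← Algebra.smul_def]
      exact hA
    have hfin : (algebraMap F (MonoidAlgebra F (Equiv.Perm (Fin p))) (Hf.card : F)) • v = 0 := by
      calc (algebraMap F (MonoidAlgebra F (Equiv.Perm (Fin p))) (Hf.card : F)) • v
          = φ ((algebraMap F (MonoidAlgebra F (Equiv.Perm (Fin p))) (Hf.card : F)) • xj) := by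
            rw [hv, map_smul φ]
        _ = φ (z • xj) := by rw [hsm]
        _ = z • v := by rw [hv, map_smul φ]
        _ = 0 := by
            apply Subtype.ext
            rw [SetLike.val_smul, smul_eq_mul, hz]
            exact (z_mul_specht_eq_zero h2 hlp Tl X' hX'card hvmem).trans (by simp)
    have hval : ((Hf.card : F)) • (↑v : MonoidAlgebra F (Equiv.Perm (Fin p))) = 0 := by
      have hval0 := congrArg Subtype.val hfin
      rw [SetLike.val_smul, smul_eq_mul, ← Algebra.smul_def] at hval0
      simpa using hval0
    rcases smul_eq_zero.1 hval with hc | hv0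
    · exact hcF hc
    · exact hvne (Subtype.ext (by simpa using hv0))

end HookAux

end

/-- Let `p` be an odd prime and `F` (algebraically closed) of
characteristic `p`.  The Specht modules `S^{(p-j,1^j)}` for `F𝔖_p`, `j = 0, …, p-1`,
are pairwise non-isomorphic (for any choices of tableaux used to realize them). -/
theorem hook_specht_pairwise_nonisomorphic
    (p : ℕ) [hp : Fact p.Prime] (hodd : Odd p)
    (F : Type) [Field F] [IsAlgClosed F] [CharP F p]
    (j l : ℕ) (hj : j ≤ p - 1) (hl : l ≤ p - 1) (hjl : j ≠ l)
    (Tj : Fin p ≃ ↥((hookDiagram p j (by have := hp.out.two_le; omega)).cells))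
    (Tl : Fin p ≃ ↥((hookDiagram p l (by have := hp.out.two_le; omega)).cells)) :
    ¬ Nonempty
      (↥(spechtModule F p (hookDiagram p j (by have := hp.out.two_le; omega)) Tj)
        ≃ₗ[MonoidAlgebra F (Equiv.Perm (Fin p))]
       ↥(spechtModule F p (hookDiagram p l (by have := hp.out.two_le; omega)) Tl)) := by
  rintro ⟨φ⟩
  have hp2 : 2 ≤ p := hp.out.two_le
  rcases lt_trichotomy j l with h | h | h
  · exact HookAux.key hp.out hodd (by omega) (by omega) h Tl Tj φ.symm
  · exact hjl h
  · exact HookAux.key hp.out hodd (by omega) (by omega) h Tj Tl φ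
end

section
/- Let p be prime, k a positive integer, Δ = Δ_k(𝔖_p) ≤ 𝔖_{pk} the diagonal copy of 𝔖_p, C_p ≤ 𝔖_p of order p generated by a p-cycle π, and D = Δ_k(𝔖_p)·C_k^{[p]} where C_k ≤ 𝔖_k is generated by a k-cycle, with p ∤ k. If x ∈ 𝔖_{pk} and p divides |xDx⁻¹ ∩ Δ|, then there exists x₀ ∈ (∏_{r=1}^k C_p[r])·𝔖_k^{[p]} with Δ x₀ D = Δ x D. -/
/-! We realize the symmetric group `𝔖_{pk}` as `Equiv.Perm (Fin k × Fin p)`, where the pair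
`(r, i)` denotes the `i`-th entry of the `r`-th one of the `k` successive blocks of size
`p` in `{1, …, pk}`. -/

/-- `Δ_k : 𝔖_p →* 𝔖_{pk}`: the diagonal embedding, acting simultaneously on each of the
`k` blocks of size `p`. -/
def diagHom (k p : ℕ) : Equiv.Perm (Fin p) →* Equiv.Perm (Fin k × Fin p) where
  toFun σ := Equiv.prodCongrRight fun _ => σ
  map_one' := by
    ext x
    · rfl
    · rfl
  map_mul' σ τ := by
    ext x
    · rfl
    · rfl

/-- `τ ↦ τ^{[p]} : 𝔖_k →* 𝔖_{pk}`: permuting the `k` blocks of size `p`. -/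
def blockHom (k p : ℕ) : Equiv.Perm (Fin k) →* Equiv.Perm (Fin k × Fin p) where
  toFun τ := Equiv.prodCongrLeft fun _ => τ
  map_one' := by
    ext x
    · rfl
    · rfl
  map_mul' σ τ := by
    ext x
    · rfl
    · rfl

/-- `(σ_1, …, σ_k) ↦ ∏_{r=1}^k σ_r[r]`: each `σ_r` acts on the `r`-th block of size `p`. -/
def blockwiseHom (k p : ℕ) : (Fin k → Equiv.Perm (Fin p)) →* Equiv.Perm (Fin k × Fin p) where
  toFun y := Equiv.prodCongrRight y
  map_one' := by
    ext x
    · rfl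
    · rfl
  map_mul' y z := by
    ext x
    · rfl
    · rfl

/-- The subgroup `∏_{r=1}^k C_p[r]` of `𝔖_{pk}`, where `C_p = ⟨finRotate p⟩` is generated
by a `p`-cycle. -/
def bigCpSubgroup (k p : ℕ) : Subgroup (Equiv.Perm (Fin k × Fin p)) :=
  Subgroup.map (blockwiseHom k p)
    (Subgroup.pi Set.univ fun _ => Subgroup.zpowers (finRotate p))

/-- The diagonal subgroup `Δ_k(𝔖_p)`. -/
def diagSubgroup (k p : ℕ) : Subgroup (Equiv.Perm (Fin k × Fin p)) :=
  (diagHom k p).range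

/-- The diagonal subgroup `Δ_k(C_p)` of the cyclic group `C_p = ⟨finRotate p⟩`. -/
def diagCpSubgroup (k p : ℕ) : Subgroup (Equiv.Perm (Fin k × Fin p)) :=
  Subgroup.map (diagHom k p) (Subgroup.zpowers (finRotate p))

/-- The subgroup `𝔖_k^{[p]}` of block permutations. -/
def blockSubgroup (k p : ℕ) : Subgroup (Equiv.Perm (Fin k × Fin p)) :=
  (blockHom k p).range

/-- The subgroup `D = Δ_k(𝔖_p) · C_k^{[p]}`, where `C_k = ⟨finRotate k⟩ ≤ 𝔖_k` is generated
by a `k`-cycle (`Δ_k(𝔖_p)` and `C_k^{[p]}` centralize each other, so `D` is their join). -/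
def Dsubgroup (k p : ℕ) : Subgroup (Equiv.Perm (Fin k × Fin p)) :=
  diagSubgroup k p ⊔ Subgroup.map (blockHom k p) (Subgroup.zpowers (finRotate k))

open Equiv

lemma diagHom_apply (k p : ℕ) (σ : Perm (Fin p)) (q : Fin k × Fin p) :
    diagHom k p σ q = (q.1, σ q.2) := rfl

lemma blockHom_apply (k p : ℕ) (τ : Perm (Fin k)) (q : Fin k × Fin p) :
    blockHom k p τ q = (τ q.1, q.2) := rfl

lemma blockwiseHom_apply (k p : ℕ) (y : Fin k → Perm (Fin p)) (q : Fin k × Fin p) :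
    blockwiseHom k p y q = (q.1, y q.1 q.2) := rfl

lemma diag_block_comm (k p : ℕ) (σ : Perm (Fin p)) (τ : Perm (Fin k)) :
    diagHom k p σ * blockHom k p τ = blockHom k p τ * diagHom k p σ := by
  ext q
  · rfl
  · rfl

lemma mem_D_iff {k p : ℕ} (g : Perm (Fin k × Fin p)) :
    g ∈ Dsubgroup k p ↔ ∃ σ : Perm (Fin p), ∃ τ ∈ Subgroup.zpowers (finRotate k),
      g = diagHom k p σ * blockHom k p τ := by
  constructor
  · intro hg
    let K : Subgroup (Perm (Fin k × Fin p)) :=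
      { carrier := {g | ∃ σ : Perm (Fin p), ∃ τ ∈ Subgroup.zpowers (finRotate k),
          g = diagHom k p σ * blockHom k p τ}
        one_mem' := ⟨1, 1, one_mem _, by simp⟩
        mul_mem' := by
          rintro a b ⟨σ₁, τ₁, ht₁, rfl⟩ ⟨σ₂, τ₂, ht₂, rfl⟩
          refine ⟨σ₁ * σ₂, τ₁ * τ₂, mul_mem ht₁ ht₂, ?_⟩
          rw [map_mul, map_mul, mul_assoc, ← mul_assoc (blockHom k p τ₁),
            ← diag_block_comm, mul_assoc, ← mul_assoc]
        inv_mem' := by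
          rintro a ⟨σ, τ, ht, rfl⟩
          refine ⟨σ⁻¹, τ⁻¹, inv_mem ht, ?_⟩
          rw [mul_inv_rev]
          simpa [map_inv] using (diag_block_comm k p σ⁻¹ τ⁻¹).symm }
    have hle : Dsubgroup k p ≤ K := by
      apply sup_le
      · rintro g ⟨σ, rfl⟩
        exact ⟨σ, 1, one_mem _, by simp⟩
      · rintro g ⟨τ, ht, rfl⟩
        exact ⟨1, τ, ht, by simp⟩
    exact hle hg
  · rintro ⟨σ, τ, ht, rfl⟩
    exact mul_mem ((le_sup_left : diagSubgroup k p ≤ Dsubgroup k p) ⟨σ, rfl⟩)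
      ((le_sup_right : _ ≤ Dsubgroup k p) ⟨τ, ht, rfl⟩)

open Fin.NatCast in
lemma finRotate_pow_apply' {n : ℕ} (m : ℕ) :
    ∀ i : Fin (n + 1), (finRotate (n + 1) ^ m) i = i + (m : Fin (n + 1)) := by
  induction m with
  | zero => simp
  | succ m ih =>
    intro i
    rw [pow_succ, Equiv.Perm.mul_apply, finRotate_succ_apply, ih, Nat.cast_succ]
    open Fin.CommRing in ring

lemma finRotate_pow_zero {n : ℕ} (i : Fin (n + 1)) :
    (finRotate (n + 1) ^ (i : ℕ)) 0 = i := by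
  rw [finRotate_pow_apply']
  simp [Fin.cast_val_eq_self]

lemma finRotate_pow_card {n : ℕ} : (finRotate (n + 1)) ^ (n + 1) = 1 := by
  ext i
  rw [finRotate_pow_apply']
  simp

lemma diagHom_injective (k p : ℕ) (hk : 0 < k) : Function.Injective (diagHom k p) := by
  intro σ τ h
  refine Equiv.ext fun i => ?_
  exact congrArg (fun e : Perm (Fin k × Fin p) => (e (⟨0, hk⟩, i)).2) h

/-- If `d ∈ D` has order `p`, then `d = Δ(τ)` with `τ` of order `p`. -/
lemma order_p_mem_D {k p : ℕ} (hp : p.Prime) (hk : 0 < k) (hpk : ¬ p ∣ k)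
    {d : Perm (Fin k × Fin p)} (hd : d ∈ Dsubgroup k p) (hord : orderOf d = p) :
    ∃ τ : Perm (Fin p), orderOf τ = p ∧ d = diagHom k p τ := by
  obtain ⟨σ, τ, ht, rfl⟩ := (mem_D_iff _).mp hd
  have hτk : τ ^ k = 1 := by
    obtain ⟨j, rfl⟩ := ht
    obtain ⟨n, rfl⟩ : ∃ n, k = n + 1 := ⟨k - 1, by omega⟩
    rw [← zpow_natCast, ← zpow_mul, mul_comm, zpow_mul, zpow_natCast, finRotate_pow_card,
      one_zpow]
  have hcomm : Commute (diagHom k p σ) (blockHom k p τ) := diag_block_comm k p σ τ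
  have hpow : diagHom k p (σ ^ p) * blockHom k p (τ ^ p) = 1 := by
    have h1 := pow_orderOf_eq_one (diagHom k p σ * blockHom k p τ)
    rw [hord, hcomm.mul_pow, ← map_pow, ← map_pow] at h1
    exact h1
  have hτp : τ ^ p = 1 := by
    refine Equiv.ext fun r => ?_
    exact congrArg Prod.fst
      (congrArg (fun e : Perm (Fin k × Fin p) => e (r, ⟨0, hp.pos⟩)) hpow)
  have hτ1 : τ = 1 := by
    rw [← orderOf_eq_one_iff]
    have h1 : orderOf τ ∣ p := orderOf_dvd_of_pow_eq_one hτp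
    have h2 : orderOf τ ∣ k := orderOf_dvd_of_pow_eq_one hτk
    have := Nat.dvd_gcd h1 h2
    rwa [Nat.Coprime.gcd_eq_one (hp.coprime_iff_not_dvd.mpr hpk), Nat.dvd_one] at this
  subst hτ1
  rw [map_one, mul_one] at hord ⊢
  refine ⟨σ, ?_, rfl⟩
  rw [← orderOf_injective (diagHom k p) (diagHom_injective k p hk) σ]
  exact hord

/-- Any element of order `p` in `𝔖_p` is conjugate to `finRotate p`. -/
lemma exists_conj_finRotate {p : ℕ} (hp : p.Prime) {σ : Perm (Fin p)}
    (h : orderOf σ = p) : ∃ β : Perm (Fin p), β * finRotate p * β⁻¹ = σ := by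
  have h2le := hp.two_le
  obtain ⟨n, rfl⟩ : ∃ n, p = n + 2 := ⟨p - 2, by omega⟩
  have hcard : Fintype.card (Fin (n + 2)) = n + 2 := Fintype.card_fin _
  have hc : σ.IsCycle :=
    Equiv.Perm.isCycle_of_prime_order'' (by rwa [hcard]) (by rw [hcard, h])
  have hconj : IsConj (finRotate (n + 2)) σ := by
    refine (isCycle_finRotate).isConj hc ?_
    rw [support_finRotate, ← hc.orderOf, h, Finset.card_univ, hcard]
  obtain ⟨β, hβ⟩ := isConj_iff.mp hconj
  exact ⟨β, hβ⟩

/-- The centralizer of `Δ_k(finRotate p)` is contained in `(∏_r C_p[r]) ⬝ 𝔖_k^{[p]}`. -/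
lemma centralizer_decomp {k p : ℕ} (hp : 0 < p) (x : Perm (Fin k × Fin p))
    (hcomm : x * diagHom k p (finRotate p) = diagHom k p (finRotate p) * x) :
    ∃ y ∈ bigCpSubgroup k p, ∃ z ∈ blockSubgroup k p, x = y * z := by
  obtain ⟨n, rfl⟩ : ∃ n, p = n + 1 := ⟨p - 1, by omega⟩
  set π := finRotate (n + 1) with hπ
  have key : ∀ r i, x (r, π i) = ((x (r, i)).1, π (x (r, i)).2) := by
    intro r i
    exact congrArg (fun e : Perm (Fin k × Fin (n + 1)) => e (r, i)) hcomm
  have key2 : ∀ m r i, x (r, (π ^ m) i) = ((x (r, i)).1, (π ^ m) (x (r, i)).2) := by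
    intro m
    induction m with
    | zero => intro r i; simp
    | succ m ih =>
      intro r i
      rw [pow_succ, Equiv.Perm.mul_apply, ih r (π i), key r i, Equiv.Perm.mul_apply]
  have keyx : ∀ r i, x (r, i) = ((x (r, 0)).1, (π ^ (i : ℕ)) (x (r, 0)).2) := by
    intro r i
    rw [← key2 ((i : ℕ)) r 0, finRotate_pow_zero]
  have ha : Function.Injective (fun r => (x (r, 0)).1) := by
    intro r r' h
    dsimp at h
    set m : ℕ := (((x (r', 0)).2 - (x (r, 0)).2 : Fin (n + 1)) : ℕ) with hm
    have h2 : x (r, (π ^ m) 0) = x (r', 0) := by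
      rw [key2 m r 0]
      refine Prod.ext h ?_
      show (π ^ m) (x (r, 0)).2 = (x (r', 0)).2
      rw [finRotate_pow_apply', hm, Fin.cast_val_eq_self]
      open Fin.CommRing in ring
    have := x.injective h2
    exact (Prod.ext_iff.mp this).1
  let τ : Perm (Fin k) := Equiv.ofBijective _ (Finite.injective_iff_bijective.mp ha)
  let y : Fin k → Perm (Fin (n + 1)) := fun s => π ^ (((x (τ.symm s, 0)).2 : ℕ))
  refine ⟨blockwiseHom k (n + 1) y, ?_, blockHom k (n + 1) τ, ⟨τ, rfl⟩, ?_⟩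
  · exact ⟨y, fun s _ => ⟨((x (τ.symm s, 0)).2 : ℕ), by simp [y, zpow_natCast, hπ]⟩, rfl⟩
  · ext q
    · obtain ⟨r, i⟩ := q
      rw [keyx r i]
      rfl
    · obtain ⟨r, i⟩ := q
      rw [keyx r i]
      have hy : y (τ r) = π ^ (((x (r, 0)).2 : ℕ)) := by
        simp only [y, Equiv.symm_apply_apply]
      have h5 : (π ^ (i : ℕ)) (x (r, 0)).2 = (π ^ (((x (r, 0)).2 : ℕ))) i := by
        rw [finRotate_pow_apply', finRotate_pow_apply', Fin.cast_val_eq_self,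
          Fin.cast_val_eq_self]
        exact add_comm _ _
      calc ((((x (r, 0)).1, (π ^ (i : ℕ)) (x (r, 0)).2) : Fin k × Fin (n+1)).2 : ℕ)
          = ((π ^ (((x (r, 0)).2 : ℕ))) i : ℕ) := congrArg Fin.val h5
        _ = ((y (τ r)) i : ℕ) := by rw [hy]
        _ = ((((blockwiseHom k (n + 1)) y * (blockHom k (n + 1)) τ) (r, i)).2 : ℕ) := rfl

open scoped Pointwise in
lemma coset_eq {G : Type*} [Group G] (Δ D : Subgroup G) (x a b : G)
    (ha : a ∈ Δ) (hb : b ∈ D) :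
    (Δ : Set G) * {a * x * b} * D = (Δ : Set G) * {x} * D := by
  ext s
  simp only [Set.mem_mul, Set.mem_singleton_iff, SetLike.mem_coe]
  constructor
  · rintro ⟨w, ⟨u, hu, c, rfl, rfl⟩, v, hv, rfl⟩
    exact ⟨(u * a) * x, ⟨u * a, mul_mem hu ha, x, rfl, rfl⟩, b * v, mul_mem hb hv, by group⟩
  · rintro ⟨w, ⟨u, hu, c, rfl, rfl⟩, v, hv, rfl⟩
    exact ⟨(u * a⁻¹) * (a * c * b), ⟨u * a⁻¹, mul_mem hu (inv_mem ha), a * c * b, rfl, rfl⟩,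
      b⁻¹ * v, mul_mem (inv_mem hb) hv, by group⟩

open scoped Pointwise in
/-- Let `p` be prime, `k` positive with `p ∤ k`, `Δ = Δ_k(𝔖_p)` and
`D = Δ_k(𝔖_p)·C_k^{[p]}`.  If `x ∈ 𝔖_{pk}` and `p` divides `|xDx⁻¹ ∩ Δ|`, then there is
`x₀ ∈ (∏_{r=1}^k C_p[r])·𝔖_k^{[p]}` with `Δ x₀ D = Δ x D`. -/
theorem double_coset_representative_in_centralizer
    (p k : ℕ) [hp : Fact p.Prime] (hk : 0 < k) (hpk : ¬ p ∣ k)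
    (x : Equiv.Perm (Fin k × Fin p))
    (hx : p ∣ Nat.card
      ↥(Subgroup.map (MulAut.conj x).toMonoidHom (Dsubgroup k p) ⊓ diagSubgroup k p)) :
    ∃ (x₀ : Equiv.Perm (Fin k × Fin p)),
      (∃ y ∈ bigCpSubgroup k p, ∃ z ∈ blockSubgroup k p, x₀ = y * z) ∧
      (diagSubgroup k p : Set (Equiv.Perm (Fin k × Fin p))) * {x₀} * (Dsubgroup k p) =
        (diagSubgroup k p : Set (Equiv.Perm (Fin k × Fin p))) * {x} * (Dsubgroup k p) := by

  classical
  -- Cauchy: an element of order p in xDx⁻¹ ⊓ Δ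
  obtain ⟨h, hh⟩ := exists_prime_orderOf_dvd_card'
    (G := ↥(Subgroup.map (MulAut.conj x).toMonoidHom (Dsubgroup k p) ⊓ diagSubgroup k p)) p hx
  have hgord : orderOf (h : Perm (Fin k × Fin p)) = p := by
    have h1 := orderOf_injective (Subgroup.subtype _) (Subgroup.subtype_injective _) h
    exact h1.trans hh
  obtain ⟨hg1, hg2⟩ := Subgroup.mem_inf.mp h.2
  -- right part: h = Δ(σ) with σ of order p
  obtain ⟨σ, hσ⟩ := hg2
  have hσord : orderOf σ = p := by
    rw [← orderOf_injective (diagHom k p) (diagHom_injective k p hk) σ, hσ]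
    exact hgord
  -- left part: h = x d x⁻¹ with d ∈ D of order p
  obtain ⟨d, hdD, hdg⟩ := Subgroup.mem_map.mp hg1
  have hdg' : x * d * x⁻¹ = (h : Perm (Fin k × Fin p)) := by
    simpa [MulAut.conj_apply] using hdg
  have hdord : orderOf d = p := by
    have h1 := orderOf_injective (MulAut.conj x).toMonoidHom (MulAut.conj x).injective d
    rw [hdg] at h1
    exact h1.symm.trans hgord
  obtain ⟨τ₁, hτ₁ord, rfl⟩ := order_p_mem_D hp.out hk hpk hdD hdord
  -- conjugators to finRotate p
  obtain ⟨β, hβ⟩ := exists_conj_finRotate hp.out hσord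
  obtain ⟨γ, hγ⟩ := exists_conj_finRotate hp.out hτ₁ord
  set A := diagHom k p β with hA
  set C := diagHom k p γ with hC
  set P := diagHom k p (finRotate p) with hP
  set S := diagHom k p σ with hS
  set T := diagHom k p τ₁ with hT
  have hAP : A * P * A⁻¹ = S := by
    rw [hA, hP, hS, ← map_inv, ← map_mul, ← map_mul, hβ]
  have hCP : C * P * C⁻¹ = T := by
    rw [hC, hP, hT, ← map_inv, ← map_mul, ← map_mul, hγ]
  have hxT : x * T * x⁻¹ = S := by rw [← hσ] at hdg'; exact hdg'
  set x₁ := A⁻¹ * x * C with hx₁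
  have hkey : x₁ * P * x₁⁻¹ = P := by
    have e : x₁ * P * x₁⁻¹ = A⁻¹ * (x * (C * P * C⁻¹) * x⁻¹) * A := by
      rw [hx₁]; group
    rw [e, hCP, hxT, ← hAP]; group
  have hcomm : x₁ * P = P * x₁ := by
    calc x₁ * P = (x₁ * P * x₁⁻¹) * x₁ := by group
      _ = P * x₁ := by rw [hkey]
  obtain ⟨y, hy, z, hz, hdecomp⟩ := centralizer_decomp hp.out.pos x₁ hcomm
  refine ⟨x₁, ⟨y, hy, z, hz, hdecomp⟩, ?_⟩
  have haΔ : A⁻¹ ∈ diagSubgroup k p := inv_mem ⟨β, rfl⟩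
  have hbD : C ∈ Dsubgroup k p :=
    (le_sup_left : diagSubgroup k p ≤ Dsubgroup k p) ⟨γ, rfl⟩
  have : x₁ = A⁻¹ * x * C := hx₁
  rw [this]
  exact coset_eq _ _ x A⁻¹ C haΔ hbD
end

section
/- Let p be a prime, y = ∏_{r=1}^k y_r[r] ∈ ∏_{r=1}^k C_p[r] ≤ 𝔖_{pk} with y_i ≠ y_j for some i, j, and Δ = Δ_k(𝔖_p). Then yΔy⁻¹ ∩ Δ = Δ_k(C_p). (If instead all y_r are equal, i.e. y ∈ Δ_k(C_p), then yΔy⁻¹ ∩ Δ = Δ.) -/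
private lemma finRotate_mem_zpowers_of_ne_one (p : ℕ) [hp : Fact p.Prime]
    {c : Equiv.Perm (Fin p)} (hc : c ∈ Subgroup.zpowers (finRotate p)) (hc1 : c ≠ 1) :
    finRotate p ∈ Subgroup.zpowers c := by
  obtain ⟨m, hm⟩ := Nat.exists_eq_add_of_le hp.out.two_le
  subst hm
  obtain ⟨n, rfl⟩ := hc
  have hcyc : (finRotate (2 + m)).IsCycle := by
    rw [add_comm]; exact isCycle_finRotate
  have hord : orderOf (finRotate (2 + m)) = 2 + m := by
    rw [hcyc.orderOf]
    rw [add_comm, support_finRotate, Finset.card_univ, Fintype.card_fin]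
  have hndvd : ¬ ((2 + m : ℕ) : ℤ) ∣ n := by
    intro hdvd
    apply hc1
    rw [← hord] at hdvd
    exact orderOf_dvd_iff_zpow_eq_one.mp hdvd
  have hcop : IsCoprime ((2 + m : ℕ) : ℤ) n := by
    rw [Int.isCoprime_iff_gcd_eq_one]
    rw [Int.gcd]
    simp only [Int.natAbs_natCast]
    refine (Nat.Prime.coprime_iff_not_dvd hp.out).mpr ?_
    intro h
    exact hndvd (Int.natCast_dvd_natCast.mpr h |>.trans (Int.natAbs_dvd.mpr dvd_rfl))
  obtain ⟨u, v, huv⟩ := hcop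
  refine ⟨v, ?_⟩
  have hfp : finRotate (2 + m) ^ (((2 + m : ℕ) : ℤ)) = 1 := by
    have h1 := pow_orderOf_eq_one (finRotate (2 + m))
    rw [hord] at h1
    rw [zpow_natCast]
    exact h1
  show (finRotate (2 + m) ^ n) ^ v = finRotate (2 + m)
  have key : finRotate (2 + m) ^ (u * ((2 + m : ℕ) : ℤ) + v * n)
      = (finRotate (2 + m) ^ n) ^ v := by
    rw [zpow_add, mul_comm u, mul_comm v, zpow_mul, zpow_mul, hfp, one_zpow, one_mul]
  rw [← key, huv, zpow_one]

private lemma mem_zpowers_of_commute (p : ℕ) [hp : Fact p.Prime]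
    {σ c : Equiv.Perm (Fin p)} (hc : c ∈ Subgroup.zpowers (finRotate p)) (hc1 : c ≠ 1)
    (hcomm : Commute σ c) : σ ∈ Subgroup.zpowers (finRotate p) := by
  obtain ⟨m, hm⟩ := Nat.exists_eq_add_of_le hp.out.two_le
  have hcyc : (finRotate p).IsCycle := by
    subst hm; rw [add_comm]; exact isCycle_finRotate
  have hsupp : (finRotate p).support = Finset.univ := by
    subst hm; rw [add_comm]; exact support_finRotate
  obtain ⟨j, hj⟩ := finRotate_mem_zpowers_of_ne_one p hc hc1
  have hcomm' : Commute σ (finRotate p) := by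
    rw [← hj]; exact hcomm.zpow_right j
  obtain ⟨hc', hmem⟩ := hcyc.commute_iff.mp hcomm'
  have : Equiv.Perm.ofSubtype (σ.subtypePerm hc') = σ := by
    apply Equiv.Perm.ofSubtype_subtypePerm
    intro x _
    rw [hsupp]; exact Finset.mem_univ x
  rwa [this] at hmem

/-- Let `p` be prime and `y = ∏_{r=1}^k y_r[r]` with each `y_r ∈ C_p`.
If `y_i ≠ y_j` for some `i, j`, then `yΔy⁻¹ ∩ Δ = Δ_k(C_p)`; if instead all `y_r` are
equal (i.e. `y ∈ Δ_k(C_p)`), then `yΔy⁻¹ ∩ Δ = Δ`. -/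
theorem conjugate_diagonal_intersection_cases
    (p k : ℕ) [hp : Fact p.Prime] (hk : 0 < k)
    (yr : Fin k → Equiv.Perm (Fin p)) (hyr : ∀ r, yr r ∈ Subgroup.zpowers (finRotate p)) :
    ((∃ i j, yr i ≠ yr j) →
      Subgroup.map (MulAut.conj (blockwiseHom k p yr)).toMonoidHom (diagSubgroup k p) ⊓
          diagSubgroup k p = diagCpSubgroup k p) ∧
    ((∀ i j, yr i = yr j) →
      Subgroup.map (MulAut.conj (blockwiseHom k p yr)).toMonoidHom (diagSubgroup k p) ⊓
          diagSubgroup k p = diagSubgroup k p) := by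
  set f := finRotate p with hf
  set y := blockwiseHom k p yr with hy
  have happ : ∀ (a : Fin k → Equiv.Perm (Fin p)) (r : Fin k) (x : Fin p),
      blockwiseHom k p a (r, x) = (r, a r x) := fun _ _ _ => rfl
  have hinj : Function.Injective (blockwiseHom k p) := by
    intro a b h
    funext r
    apply Equiv.ext
    intro x
    exact (Prod.ext_iff.mp (congrArg (fun e : Equiv.Perm (Fin k × Fin p) => e (r, x)) h)).2
  have hdiag : ∀ σ : Equiv.Perm (Fin p),
      diagHom k p σ = blockwiseHom k p (fun _ => σ) := fun _ => rfl
  have hconj : ∀ σ : Equiv.Perm (Fin p),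
      y * diagHom k p σ * y⁻¹ = blockwiseHom k p (fun r => yr r * σ * (yr r)⁻¹) := by
    intro σ
    rw [hdiag, hy, ← map_inv, ← map_mul, ← map_mul]
    rfl
  have habel : ∀ a b : Equiv.Perm (Fin p), a ∈ Subgroup.zpowers f →
      b ∈ Subgroup.zpowers f → a * b = b * a := by
    rintro a b ⟨m, rfl⟩ ⟨n, rfl⟩
    exact (Commute.zpow_zpow_self f m n).eq
  have hmem : ∀ g : Equiv.Perm (Fin k × Fin p),
      g ∈ Subgroup.map (MulAut.conj y).toMonoidHom (diagSubgroup k p) ⊓ diagSubgroup k p ↔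
        ∃ σ τ : Equiv.Perm (Fin p), (∀ r, τ = yr r * σ * (yr r)⁻¹) ∧ g = diagHom k p τ := by
    intro g
    constructor
    · rintro ⟨⟨d, ⟨σ, rfl⟩, rfl⟩, ⟨τ, hτ⟩⟩
      refine ⟨σ, τ, ?_, hτ.symm⟩
      have : blockwiseHom k p (fun r => yr r * σ * (yr r)⁻¹)
          = blockwiseHom k p (fun _ => τ) := by
        rw [← hconj, ← hdiag]
        simpa using hτ.symm
      have := hinj this
      intro r
      exact (congrFun this r).symm
    · rintro ⟨σ, τ, hστ, rfl⟩
      refine ⟨⟨diagHom k p σ, ⟨σ, rfl⟩, ?_⟩, ⟨τ, rfl⟩⟩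
      show y * diagHom k p σ * y⁻¹ = diagHom k p τ
      rw [hconj, hdiag]
      congr 1
      funext r
      exact (hστ r).symm
  constructor
  · rintro ⟨i, j, hij⟩
    apply le_antisymm
    · intro g hg
      obtain ⟨σ, τ, hστ, rfl⟩ := (hmem g).mp hg
      have hcomm : Commute σ ((yr j)⁻¹ * yr i) := by
        have h1 : yr i * σ * (yr i)⁻¹ = yr j * σ * (yr j)⁻¹ := (hστ i).symm.trans (hστ j)
        have h2 : (yr j)⁻¹ * yr i * σ = σ * ((yr j)⁻¹ * yr i) := by
          have h3 := congrArg (fun z => (yr j)⁻¹ * z * yr i) h1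
          simpa [mul_assoc] using h3
        exact h2.symm
      have hcne : (yr j)⁻¹ * yr i ≠ 1 := fun h => hij (inv_mul_eq_one.mp h).symm
      have hcmem : (yr j)⁻¹ * yr i ∈ Subgroup.zpowers f :=
        mul_mem (inv_mem (hyr j)) (hyr i)
      have hσ : σ ∈ Subgroup.zpowers f := mem_zpowers_of_commute p hcmem hcne hcomm
      have hτσ : τ = σ := by
        rw [hστ i, habel (yr i) σ (hyr i) hσ, mul_inv_cancel_right]
      exact ⟨σ, hσ, by rw [hτσ]⟩
    · rintro g ⟨σ, hσ, rfl⟩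
      refine (hmem _).mpr ⟨σ, σ, ?_, rfl⟩
      intro r
      rw [habel (yr r) σ (hyr r) hσ, mul_inv_cancel_right]
  · intro hall
    apply le_antisymm
    · exact inf_le_right
    · rintro g ⟨σ, rfl⟩
      set i0 : Fin k := ⟨0, hk⟩
      refine (hmem _).mpr ⟨(yr i0)⁻¹ * σ * yr i0, σ, ?_, rfl⟩
      intro r
      rw [hall r i0]
      group
end
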